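/- Let (Ω, μ) be a probability space, let n ≥ 1 be an integer, let X_1, …, X_n : Ω → ℕ be random variables, and let d_1, …, d_n be natural numbers such that Σ_{i=1}^n 2^{d_i} ≤ 2n and such that for every i and every natural number k, μ({ω : X_i(ω) ≥ d_i + k}) ≤ (1/2)^k. Then μ({ω : ∃ i, X_i(ω) ≥ log₂(n) + 10}) ≤ 1/100. -/

import Mathlib

open MeasureTheory

/-- Union-bound lemma: if each `X i` exceeds its deterministic level `d i` by `k` with
probability at most `2^{-k}` and `∑ 2^{d i} ≤ 2n`, then with probability at least `0.99`,
no `X i` reaches level `log₂ n + 10`. -/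
theorem stmt_1 {Ω : Type*} [MeasurableSpace Ω] (μ : Measure Ω) [IsProbabilityMeasure μ]
    (n : ℕ) (hn : 1 ≤ n) (X : Fin n → Ω → ℕ) (d : Fin n → ℕ)
    (hd : ∑ i, (2 : ℝ) ^ (d i) ≤ 2 * n)
    (htail : ∀ i, ∀ k : ℕ, μ {ω | d i + k ≤ X i ω} ≤ (1 / 2 : ENNReal) ^ k) :
    μ {ω | ∃ i, Real.logb 2 n + 10 ≤ (X i ω : ℝ)} ≤ 1 / 100 := by
  set M := Nat.log 2 n + 10 with hM
  have hnlog : n < 2 ^ (Nat.log 2 n + 1) := Nat.lt_pow_succ_log_self (by norm_num) n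
  have h2nM : (2 * n : ℕ) < 2 ^ M := by
    have h1 : 2 * n < 2 ^ (Nat.log 2 n + 2) := by
      have : 2 ^ (Nat.log 2 n + 2) = 2 * 2 ^ (Nat.log 2 n + 1) := by ring
      omega
    have h2 : (2:ℕ) ^ (Nat.log 2 n + 2) ≤ 2 ^ M := Nat.pow_le_pow_right (by norm_num) (by omega)
    omega
  have hdM : ∀ i, d i < M := by
    intro i
    have h1 : (2:ℝ) ^ (d i) ≤ 2 * n :=
      le_trans (Finset.single_le_sum (f := fun j => (2:ℝ)^(d j)) (fun j _ => by positivity) (Finset.mem_univ i)) hd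
    have h2 : (2:ℝ) ^ (d i) < 2 ^ M := lt_of_le_of_lt h1 (by exact_mod_cast h2nM)
    exact (pow_lt_pow_iff_right₀ (by norm_num : (1:ℝ) < 2)).mp h2
  -- logb bound: event subset of union
  have hlogb : (Nat.log 2 n : ℝ) ≤ Real.logb 2 n := by
    rw [Real.le_logb_iff_rpow_le (by norm_num) (by exact_mod_cast hn)]
    rw [Real.rpow_natCast]
    exact_mod_cast Nat.pow_log_le_self 2 (by omega)
  have hsub : {ω | ∃ i, Real.logb 2 n + 10 ≤ (X i ω : ℝ)} ⊆
      ⋃ i, {ω | d i + (M - d i) ≤ X i ω} := by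
    intro ω hω
    obtain ⟨i, hi⟩ := hω
    refine Set.mem_iUnion.mpr ⟨i, ?_⟩
    have : (M : ℝ) ≤ (X i ω : ℝ) := by
      have : (M : ℝ) = (Nat.log 2 n : ℝ) + 10 := by push_cast [hM]; ring
      linarith
    have hMX : M ≤ X i ω := by exact_mod_cast this
    simpa [Nat.add_sub_cancel' (hdM i).le] using hMX
  have hunion : μ {ω | ∃ i, Real.logb 2 n + 10 ≤ (X i ω : ℝ)} ≤
      ∑ i, ((1:ENNReal)/2) ^ (M - d i) :=
    (measure_mono hsub).trans <| (measure_iUnion_le _).trans <| by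
      rw [tsum_fintype]
      exact Finset.sum_le_sum fun i _ => htail i (M - d i)
  refine hunion.trans ?_
  have key : ∀ i : Fin n, ((1:ENNReal)/2) ^ (M - d i) = (1/2) ^ M * 2 ^ (d i) := by
    intro i
    have h12 : ((1:ENNReal)/2) * 2 = 1 := by
      rw [one_div, ENNReal.inv_mul_cancel (by norm_num) (by norm_num)]
    calc ((1:ENNReal)/2) ^ (M - d i)
        = (1/2) ^ (M - d i) * ((1/2) * 2) ^ (d i) := by rw [h12, one_pow, mul_one]
      _ = (1/2) ^ (M - d i) * (1/2) ^ (d i) * 2 ^ (d i) := by rw [mul_pow, mul_assoc]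
      _ = (1/2) ^ M * 2 ^ (d i) := by rw [← pow_add, Nat.sub_add_cancel (hdM i).le]
  simp only [key]
  rw [← Finset.mul_sum]
  -- sum of 2^(d i) in ENNReal ≤ 2n
  have hdnat : (∑ i, (2:ℕ) ^ (d i)) ≤ 2 * n := by
    have : ((∑ i, (2:ℕ) ^ (d i) : ℕ) : ℝ) ≤ ((2 * n : ℕ) : ℝ) := by push_cast; exact hd
    exact_mod_cast this
  have hsumE : (∑ i, (2:ENNReal) ^ (d i)) ≤ (2 * n : ℕ) := by
    have : (∑ i, (2:ENNReal) ^ (d i)) = ((∑ i, (2:ℕ) ^ (d i) : ℕ) : ENNReal) := by push_cast; ring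
    rw [this]
    exact_mod_cast hdnat
  have h200 : (200 * n : ℕ) ≤ 2 ^ M := by
    have h1 : (2:ℕ) ^ M = 1024 * 2 ^ (Nat.log 2 n) := by
      rw [hM, pow_add]; ring
    have h2 : n < 2 * 2 ^ (Nat.log 2 n) := by
      have : (2:ℕ) ^ (Nat.log 2 n + 1) = 2 * 2 ^ (Nat.log 2 n) := by ring
      omega
    nlinarith [(Nat.pow_pos (show 0 < 2 by norm_num) : 0 < 2 ^ (Nat.log 2 n))]
  calc ((1:ENNReal)/2) ^ M * ∑ i, (2:ENNReal) ^ (d i)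
      ≤ (1/2) ^ M * (2 * n : ℕ) := by gcongr
    _ ≤ (1/2) ^ M * (2 ^ M / 100) := by
        gcongr
        rw [ENNReal.le_div_iff_mul_le (by norm_num) (by norm_num)]
        calc ((2 * n : ℕ) : ENNReal) * 100 = ((200 * n : ℕ) : ENNReal) := by push_cast; ring
          _ ≤ ((2 ^ M : ℕ) : ENNReal) := by exact_mod_cast h200
          _ = 2 ^ M := by push_cast; ring
    _ = 1 / 100 := by
        rw [one_div, ← mul_div_assoc, ← ENNReal.inv_pow,
          ENNReal.inv_mul_cancel (pow_ne_zero _ (by norm_num)) (ENNReal.pow_ne_top (by norm_num))]
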